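/- Let p : E → W be a surjective covering map between topological spaces, where E is path-connected and simply connected (a universal cover of W). Let L ⊆ W be a path-connected subspace (with the subspace topology) and x ∈ L a basepoint. If the homomorphism i_♯ : π₁(L, x) → π₁(W, x) induced by the inclusion L ↪ W is bijective, then the preimage p⁻¹(L) ⊆ E is path-connected and simply connected (so the restriction p : p⁻¹(L) → L is a universal cover of L). -/

import Mathlib

open CategoryTheory unitInterval Set

namespace PUPB

/-- Clamp a point of the unit interval into `[a, b]`. -/
def clamp (a b : I) (s : I) : I :=
  ⟨min (max (s : ℝ) a) b, ⟨le_min (le_trans a.2.1 (le_max_right _ _)) b.2.1,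
    min_le_of_right_le b.2.2⟩⟩

lemma continuous_clamp (a b : I) : Continuous (clamp a b) := by
  apply Continuous.subtype_mk
  exact ((continuous_subtype_val.max continuous_const).min continuous_const)

lemma clamp_le_right (a b : I) (s : I) : clamp a b s ≤ b := by
  simp only [clamp, ← Subtype.coe_le_coe]
  exact min_le_right _ _

lemma left_le_clamp (a b : I) (h : a ≤ b) (s : I) : a ≤ clamp a b s := by
  simp only [clamp, ← Subtype.coe_le_coe]
  exact le_min (le_max_right _ _) h

lemma clamp_of_mem (a b : I) {s : I} (h1 : a ≤ s) (h2 : s ≤ b) : clamp a b s = s := by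
  simp only [clamp]
  ext
  simp only [max_eq_left (Subtype.coe_le_coe.2 h1), min_eq_left (Subtype.coe_le_coe.2 h2)]

lemma clamp_of_le (a b : I) (hab : a ≤ b) {s : I} (h : s ≤ a) : clamp a b s = a := by
  simp only [clamp]
  ext
  simp only [max_eq_right (Subtype.coe_le_coe.2 h), min_eq_left (Subtype.coe_le_coe.2 hab)]

lemma clamp_idem (a b : I) (hab : a ≤ b) (s : I) :
    clamp a b (clamp a b s) = clamp a b s :=
  clamp_of_mem a b (left_le_clamp a b hab s) (clamp_le_right a b s)

variable {Et Wt : Type} [TopologicalSpace Et] [TopologicalSpace Wt] {p : Et → Wt}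
  [∀ w : Wt, Nonempty (p ⁻¹' {w})]

/-- Uniqueness of lifts along a subinterval `[a, b]` of `I`. -/
lemma eqOn_segment (hp : IsCoveringMap p) {g₁ g₂ : I → Et}
    (h₁ : Continuous g₁) (h₂ : Continuous g₂) {a b : I} (hab : a ≤ b)
    (hproj : ∀ u, a ≤ u → u ≤ b → p (g₁ u) = p (g₂ u)) (ha : g₁ a = g₂ a) :
    ∀ u, a ≤ u → u ≤ b → g₁ u = g₂ u := by
  have key : g₁ ∘ clamp a b = g₂ ∘ clamp a b := by
    refine hp.eq_of_comp_eq (h₁.comp (continuous_clamp a b)) (h₂.comp (continuous_clamp a b))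
      (funext fun s => hproj _ (left_le_clamp a b hab s) (clamp_le_right a b s)) a ?_
    show g₁ (clamp a b a) = g₂ (clamp a b a)
    rw [clamp_of_mem a b le_rfl hab]; exact ha
  intro u hu1 hu2
  have := congrFun key u
  simpa [Function.comp, clamp_of_mem a b hu1 hu2] using this

/-- Constancy of lifts of locally constant projections along `[a, b]`. -/
lemma const_segment (hp : IsCoveringMap p) {g : I → Et} (hg : Continuous g)
    {a b : I} (hab : a ≤ b) (hproj : ∀ u, a ≤ u → u ≤ b → p (g u) = p (g a)) :
    ∀ u, a ≤ u → u ≤ b → g u = g a :=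
  eqOn_segment hp hg continuous_const hab hproj rfl

/-- The canonical local section of a trivialization through a point `e`. -/
lemma sec_self (T : Bundle.Trivialization (p ⁻¹' {w}) p) {e : Et} (he : p e ∈ T.baseSet) :
    T.toOpenPartialHomeomorph.symm (p e, (T e).2) = e := by
  have hsrc : e ∈ T.source := T.mem_source.2 he
  have : (p e, (T e).2) = T e := by
    ext
    · exact (T.coe_fst hsrc).symm
    · rfl
  rw [this]
  exact T.toOpenPartialHomeomorph.left_inv hsrc

lemma sec_proj (T : Bundle.Trivialization (p ⁻¹' {w}) p) {y : Wt} (hy : y ∈ T.baseSet) (i) :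
    p (T.toOpenPartialHomeomorph.symm (y, i)) = y :=
  T.proj_symm_apply (T.mem_target.2 hy)

lemma sec_continuousOn (T : Bundle.Trivialization (p ⁻¹' {w}) p) (i) :
    ContinuousOn (fun y => T.toOpenPartialHomeomorph.symm (y, i)) T.baseSet := by
  apply T.toOpenPartialHomeomorph.continuousOn_symm.comp
    (Continuous.continuousOn (by fun_prop))
  intro y hy
  rw [T.target_eq]
  exact ⟨hy, trivial⟩

/-- Path lifting for covering maps. -/
theorem exists_path_lift (hp : IsCoveringMap p) (γ : C(I, Wt)) (e : Et) (he : p e = γ 0) :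
    ∃ Γ : C(I, Et), (∀ s, p (Γ s) = γ s) ∧ Γ 0 = e := by
  obtain ⟨τ, hτ0, hτmono, ⟨N, hτN⟩, hcov⟩ :=
    exists_monotone_Icc_subset_open_cover_unitInterval
      (c := fun w => γ ⁻¹' (hp w).toTrivialization.baseSet)
      (fun w => (hp w).toTrivialization.open_baseSet.preimage γ.continuous)
      (fun s _ => mem_iUnion.2 ⟨γ s, (hp (γ s)).mem_toTrivialization_baseSet⟩)
  have claim : ∀ n, ∃ Γ : C(I, Et), Γ 0 = e ∧ ∀ s, s ≤ τ n → p (Γ s) = γ s := by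
    intro n
    induction n with
    | zero =>
      refine ⟨ContinuousMap.const I e, rfl, fun s hs => ?_⟩
      have : s = 0 := le_antisymm (hτ0 ▸ hs) s.2.1
      rw [this]; exact he
    | succ n ih =>
      obtain ⟨Γn, hΓ0, hΓ⟩ := ih
      obtain ⟨w, hw⟩ := hcov n
      set T := (hp w).toTrivialization with hT
      have hab : τ n ≤ τ (n + 1) := hτmono (Nat.le_succ n)
      have hbase : ∀ s : I, τ n ≤ s → s ≤ τ (n + 1) → γ s ∈ T.baseSet := fun s h1 h2 =>
        hw ⟨h1, h2⟩
      have hstart : p (Γn (τ n)) = γ (τ n) := hΓ _ le_rfl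
      have hstartmem : p (Γn (τ n)) ∈ T.baseSet := by
        rw [hstart]; exact hbase _ le_rfl hab
      set i := (T (Γn (τ n))).2 with hi
      set sec : Wt → Et := fun y => T.toOpenPartialHomeomorph.symm (y, i) with hsec
      set g : I → Et := fun s => sec (γ (clamp (τ n) (τ (n + 1)) s)) with hgdef
      have hgcont : Continuous g := by
        apply (sec_continuousOn T i).comp_continuous
          (γ.continuous.comp (continuous_clamp _ _))
        intro s
        exact hbase _ (left_le_clamp _ _ hab s) (clamp_le_right _ _ s)
      have hbdry : ∀ s : I, (s : ℝ) = ((τ n : I) : ℝ) → Γn s = g s := by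
        intro s hs
        have hs' : s = τ n := Subtype.ext hs
        subst hs'
        simp only [hgdef, hsec]
        rw [clamp_of_mem _ _ le_rfl hab, ← hstart, sec_self T hstartmem]
      refine ⟨⟨fun s => if (s : ℝ) ≤ ((τ n : I) : ℝ) then Γn s else g s, ?_⟩, ?_, ?_⟩
      · exact Continuous.if_le Γn.continuous hgcont continuous_subtype_val continuous_const hbdry
      · simp only [ContinuousMap.coe_mk]
        rw [if_pos (by exact_mod_cast (τ n).2.1 : ((0:I) : ℝ) ≤ ((τ n : I) : ℝ))]
        exact hΓ0
      · intro s hs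
        simp only [ContinuousMap.coe_mk]
        by_cases hcase : (s : ℝ) ≤ ((τ n : I) : ℝ)
        · rw [if_pos hcase]; exact hΓ s hcase
        · rw [if_neg hcase]
          push_neg at hcase
          have h1 : τ n ≤ s := le_of_lt hcase
          simp only [hgdef, hsec]
          rw [clamp_of_mem _ _ h1 hs]
          exact sec_proj T (hbase s h1 hs) i
  obtain ⟨Γ, hΓ0, hΓ⟩ := claim N
  exact ⟨Γ, fun s => hΓ s (by rw [hτN N le_rfl]; exact le_one'), hΓ0⟩


/-- Homotopy (square) lifting for covering maps. -/
theorem exists_square_lift (hp : IsCoveringMap p) (F : C(I × I, Wt)) (e : Et)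
    (he : p e = F (0, 0)) :
    ∃ Γ : C(I × I, Et), (∀ z, p (Γ z) = F z) ∧ Γ (0, 0) = e := by
  obtain ⟨τ, hτ0, hτmono, ⟨N, hτN⟩, hcov⟩ :=
    exists_monotone_Icc_subset_open_cover_unitInterval_prod_self
      (c := fun w => F ⁻¹' (hp w).toTrivialization.baseSet)
      (fun w => (hp w).toTrivialization.open_baseSet.preimage F.continuous)
      (fun z _ => mem_iUnion.2 ⟨F z, (hp (F z)).mem_toTrivialization_baseSet⟩)
  have hbot : ∀ n : ℕ, (0 : I) ≤ τ n := by
    intro n; rw [← hτ0]; exact hτmono (Nat.zero_le n)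
  have hτtop : ∀ s : I, s ≤ τ N := fun s => by rw [hτN N le_rfl]; exact le_one'
  have claim : ∀ m, ∃ Γ : C(I × I, Et), Γ (0, 0) = e ∧
      ∀ s t : I, t ≤ τ m → p (Γ (s, t)) = F (s, t) := by
    intro m
    induction m with
    | zero =>
      obtain ⟨Γb, hΓb, hΓb0⟩ := exists_path_lift hp ⟨fun s => F (s, 0), by fun_prop⟩ e he
      refine ⟨⟨fun z => Γb z.1, by fun_prop⟩, hΓb0, fun s t ht => ?_⟩
      have ht' : t = 0 := le_antisymm (hτ0 ▸ ht) nonneg'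
      subst ht'
      exact hΓb s
    | succ m ihm =>
      obtain ⟨Γ, hΓe, hΓ⟩ := ihm
      have hmm : τ m ≤ τ (m + 1) := hτmono (Nat.le_succ m)
      set c : I → I := clamp (τ m) (τ (m + 1)) with hc
      have hcmem : ∀ t, c t ∈ Icc (τ m) (τ (m + 1)) :=
        fun t => ⟨left_le_clamp _ _ hmm t, clamp_le_right _ _ t⟩
      have hcc : ∀ t, c (c t) = c t := clamp_idem _ _ hmm
      have hccont : Continuous c := continuous_clamp _ _
      have hclo : ∀ {v : I}, v ≤ τ m → c v = τ m := fun {v} hv => clamp_of_le _ _ hmm hv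
      have hcid : ∀ {v : I}, τ m ≤ v → v ≤ τ (m + 1) → c v = v :=
        fun {v} h1 h2 => clamp_of_mem _ _ h1 h2
      have hcbot : c (τ m) = τ m := hclo le_rfl
      -- inner induction along the strip I × [τ m, τ (m+1)]
      have inner : ∀ n, ∃ sg : C(I × I, Et),
          (∀ s t : I, sg (s, t) = sg (s, c t)) ∧
          (∀ s t : I, s ≤ τ n → p (sg (s, t)) = F (s, c t)) ∧
          (∀ s : I, s ≤ τ n → sg (s, τ m) = Γ (s, τ m)) ∧
          (∀ s t : I, τ n ≤ s → sg (s, t) = sg (τ n, c t)) := by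
        intro n
        induction n with
        | zero =>
          have hstart : p (Γ (0, τ m)) = F (0, c 0) := by
            rw [hclo (hbot m)]
            exact hΓ 0 (τ m) le_rfl
          obtain ⟨Λ, hΛ, hΛ0⟩ := exists_path_lift hp
            ⟨fun u => F (0, c u), F.continuous.comp (continuous_const.prodMk hccont)⟩
            (Γ (0, τ m)) hstart
          have hΛc : ∀ u : I, p (Λ u) = F (0, c u) := hΛ
          have hΛconst : ∀ u, u ≤ τ m → Λ u = Λ 0 := fun u hu =>
            const_segment hp Λ.continuous (hbot m)
              (fun v _ hv2 => by
                rw [hΛc, hΛc, hclo hv2, hclo (hbot m)]) u nonneg' hu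
          refine ⟨⟨fun z => Λ (c z.2), Λ.continuous.comp (hccont.comp continuous_snd)⟩,
            ?_, ?_, ?_, ?_⟩
          · intro s t
            simp only [ContinuousMap.coe_mk, hcc]
          · intro s t hs
            have hs' : s = 0 := le_antisymm (hτ0 ▸ hs) nonneg'
            subst hs'
            simp only [ContinuousMap.coe_mk]
            rw [hΛc, hcc]
          · intro s hs
            have hs' : s = 0 := le_antisymm (hτ0 ▸ hs) nonneg'
            subst hs'
            simp only [ContinuousMap.coe_mk]
            rw [hcbot, hΛconst (τ m) le_rfl, hΛ0]
          · intro s t _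
            simp only [ContinuousMap.coe_mk, hcc]
        | succ n ihn =>
          obtain ⟨sg, hA, hB, hC, hD⟩ := ihn
          obtain ⟨w, hw⟩ := hcov n m
          set T := (hp w).toTrivialization with hT
          have hnn : τ n ≤ τ (n + 1) := hτmono (Nat.le_succ n)
          set r : I → I := clamp (τ n) (τ (n + 1)) with hr
          have hrcont : Continuous r := continuous_clamp _ _
          have hrmem : ∀ s, r s ∈ Icc (τ n) (τ (n + 1)) :=
            fun s => ⟨left_le_clamp _ _ hnn s, clamp_le_right _ _ s⟩
          have hrid : ∀ {v : I}, τ n ≤ v → v ≤ τ (n + 1) → r v = v :=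
            fun {v} h1 h2 => clamp_of_mem _ _ h1 h2
          have hrlo : ∀ {v : I}, v ≤ τ n → r v = τ n := fun {v} hv => clamp_of_le _ _ hnn hv
          have hbase : ∀ s t : I, s ∈ Icc (τ n) (τ (n + 1)) → t ∈ Icc (τ m) (τ (m + 1)) →
              F (s, t) ∈ T.baseSet := fun s t hs ht => hw (Set.mk_mem_prod hs ht)
          have hedge : ∀ t : I, p (sg (τ n, c t)) = F (τ n, c t) := by
            intro t
            rw [hB (τ n) (c t) le_rfl, hcc]
          have hedgemem : ∀ t : I, sg (τ n, c t) ∈ T.source := by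
            intro t
            rw [T.mem_source, hedge]
            exact hbase _ _ ⟨le_rfl, hnn⟩ (hcmem t)
          set η : I × I → Et := fun z =>
            T.toOpenPartialHomeomorph.symm (F (r z.1, c z.2), (T (sg (τ n, c z.2))).2) with hη
          have hηbase : ∀ z : I × I, F (r z.1, c z.2) ∈ T.baseSet :=
            fun z => hbase _ _ (hrmem z.1) (hcmem z.2)
          have hηcont : Continuous η := by
            have h1 : Continuous fun z : I × I => sg (τ n, c z.2) :=
              sg.continuous.comp (continuous_const.prodMk (hccont.comp continuous_snd))
            have h2 : Continuous fun z : I × I => (T (sg (τ n, c z.2)) : Wt × (p ⁻¹' {w})).2 := by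
              have h2' := ContinuousOn.comp_continuous T.toOpenPartialHomeomorph.continuousOn h1
                (fun z : I × I => hedgemem z.2)
              exact h2'.snd
            have h3 : Continuous fun z : I × I => F (r z.1, c z.2) :=
              F.continuous.comp ((hrcont.comp continuous_fst).prodMk
                (hccont.comp continuous_snd))
            refine T.toOpenPartialHomeomorph.continuousOn_symm.comp_continuous
              (h3.prodMk h2) ?_
            intro z
            rw [T.target_eq]
            exact ⟨hηbase z, trivial⟩
          have hηproj : ∀ z : I × I, p (η z) = F (r z.1, c z.2) :=
            fun z => sec_proj T (hηbase z) _
          have hηleft : ∀ t : I, η (τ n, t) = sg (τ n, c t) := by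
            intro t
            have h1 : r (τ n) = τ n := hrlo le_rfl
            show T.toOpenPartialHomeomorph.symm (F (r (τ n), c t), (T (sg (τ n, c t))).2) = _
            rw [h1, ← hedge t]
            exact sec_self T (by rw [hedge t]; exact hbase _ _ ⟨le_rfl, hnn⟩ (hcmem t))
          have hbdry : ∀ z : I × I, (z.1 : ℝ) = ((τ n : I) : ℝ) → sg z = η z := by
            intro z hz
            have hz' : z.1 = τ n := Subtype.ext hz
            rw [show z = (z.1, z.2) from rfl, hz', hηleft z.2]
            exact hA (τ n) z.2
          -- bottom edge of the new square agrees with Γ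
          have hbotedge : ∀ s : I, τ n ≤ s → s ≤ τ (n + 1) → η (s, τ m) = Γ (s, τ m) := by
            have e1 : η (τ n, τ m) = Γ (τ n, τ m) := by
              rw [hηleft (τ m), hcbot]
              exact hC (τ n) le_rfl
            refine eqOn_segment hp (g₁ := fun u => η (u, τ m)) (g₂ := fun u => Γ (u, τ m))
              (hηcont.comp (continuous_id.prodMk continuous_const))
              (Γ.continuous.comp (continuous_id.prodMk continuous_const)) hnn ?_ e1
            intro u hu1 hu2
            rw [hηproj (u, τ m), hrid hu1 hu2, hcbot]
            exact (hΓ u (τ m) le_rfl).symm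
          refine ⟨⟨fun z => if (z.1 : ℝ) ≤ ((τ n : I) : ℝ) then sg z else η z, ?_⟩, ?_, ?_, ?_, ?_⟩
          · exact Continuous.if_le sg.continuous hηcont
              (continuous_subtype_val.comp continuous_fst) continuous_const hbdry
          · intro s t
            simp only [ContinuousMap.coe_mk]
            by_cases hcase : (s : ℝ) ≤ ((τ n : I) : ℝ)
            · rw [if_pos hcase, if_pos hcase]
              exact hA s t
            · rw [if_neg hcase, if_neg hcase]
              show η (s, t) = η (s, c t)
              simp only [hη, hcc]
          · intro s t hs
            simp only [ContinuousMap.coe_mk]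
            by_cases hcase : (s : ℝ) ≤ ((τ n : I) : ℝ)
            · rw [if_pos hcase]
              exact hB s t hcase
            · rw [if_neg hcase]
              push_neg at hcase
              have h1 : τ n ≤ s := le_of_lt hcase
              rw [hηproj (s, t), hrid h1 hs]
          · intro s hs
            simp only [ContinuousMap.coe_mk]
            by_cases hcase : (s : ℝ) ≤ ((τ n : I) : ℝ)
            · rw [if_pos hcase]
              exact hC s hcase
            · rw [if_neg hcase]
              push_neg at hcase
              exact hbotedge s (le_of_lt hcase) hs
          · intro s t hs
            simp only [ContinuousMap.coe_mk]
            have hrs : r s = τ (n + 1) := by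
              ext
              show min (max (s : ℝ) (τ n)) (τ (n + 1)) = ((τ (n+1) : I) : ℝ)
              rw [max_eq_left (le_trans (Subtype.coe_le_coe.2 hnn) (Subtype.coe_le_coe.2 hs)),
                min_eq_right (Subtype.coe_le_coe.2 hs)]
            by_cases hcase : (s : ℝ) ≤ ((τ n : I) : ℝ)
            · -- degenerate: τ n = τ (n+1) = s
              have h1 : s = τ n := Subtype.ext (le_antisymm hcase
                (Subtype.coe_le_coe.2 (le_trans hnn hs)))
              have h2 : τ (n + 1) = τ n := le_antisymm (by rw [← h1]; exact hs) hnn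
              rw [if_pos hcase, if_pos (show ((τ (n+1) : I) : ℝ) ≤ ((τ n : I) : ℝ) by rw [h2]),
                h1, h2]
              exact hA (τ n) t
            · rw [if_neg hcase]
              by_cases hcase2 : ((τ (n + 1) : I) : ℝ) ≤ ((τ n : I) : ℝ)
              · -- τ (n+1) = τ n
                have h2 : τ (n + 1) = τ n := Subtype.ext (le_antisymm hcase2
                  (Subtype.coe_le_coe.2 hnn))
                rw [if_pos (by rw [h2] : ((τ (n+1) : I) : ℝ) ≤ ((τ n : I) : ℝ))]
                show η (s, t) = sg (τ (n + 1), c t)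
                rw [h2]
                show T.toOpenPartialHomeomorph.symm (F (r s, c t), (T (sg (τ n, c t))).2) = _
                rw [hrs, h2, ← hedge t]
                exact sec_self T (by rw [hedge t]; exact hbase _ _ ⟨le_rfl, hnn⟩ (hcmem t))
              · rw [if_neg hcase2]
                show η (s, t) = η (τ (n + 1), c t)
                simp only [hη]
                rw [hrs, hcc, hrid hnn le_rfl]
          
      obtain ⟨sg, hA, hB, hC, _⟩ := inner N
      have hbdry2 : ∀ z : I × I, ((z.2 : ℝ)) = ((τ m : I) : ℝ) → Γ z = sg z := by
        intro z hz
        have hz' : z.2 = τ m := Subtype.ext hz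
        rw [show z = (z.1, z.2) from rfl, hz']
        exact (hC z.1 (hτtop z.1)).symm
      refine ⟨⟨fun z => if (z.2 : ℝ) ≤ ((τ m : I) : ℝ) then Γ z else sg z, ?_⟩, ?_, ?_⟩
      · exact Continuous.if_le Γ.continuous sg.continuous
          (continuous_subtype_val.comp continuous_snd) continuous_const hbdry2
      · simp only [ContinuousMap.coe_mk]
        rw [if_pos (by exact_mod_cast Subtype.coe_le_coe.2 (hbot m) :
          (((0:I) : ℝ)) ≤ ((τ m : I) : ℝ))]
        exact hΓe
      · intro s t ht
        simp only [ContinuousMap.coe_mk]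
        by_cases hcase : (t : ℝ) ≤ ((τ m : I) : ℝ)
        · rw [if_pos hcase]
          exact hΓ s t hcase
        · rw [if_neg hcase]
          push_neg at hcase
          rw [hB s t (hτtop s), hcid (le_of_lt hcase) ht]
  obtain ⟨Γ, hΓe, hΓ⟩ := claim N
  exact ⟨Γ, fun z => hΓ z.1 z.2 (hτtop z.2), hΓe⟩

/-- Lifts (with common starting point) of homotopic paths have the same endpoint. -/
theorem lift_end_eq (hp : IsCoveringMap p) {y₀ y₁ : Wt} {γ₀ γ₁ : Path y₀ y₁}
    (h : γ₀.Homotopic γ₁) {Γ₀ Γ₁ : C(I, Et)}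
    (h₀ : ∀ t, p (Γ₀ t) = γ₀ t) (h₁ : ∀ t, p (Γ₁ t) = γ₁ t) (hst : Γ₀ 0 = Γ₁ 0) :
    Γ₀ 1 = Γ₁ 1 := by
  obtain ⟨H⟩ := h
  have hHe : p (Γ₀ 0) = H.toContinuousMap (0, 0) := by
    rw [h₀ 0]
    exact (H.apply_zero 0).symm
  obtain ⟨Ω, hΩ, hΩ0⟩ := exists_square_lift hp H.toContinuousMap (Γ₀ 0) hHe
  have key : ∀ s t : I, p (Ω (s, t)) = H (s, t) := fun s t => hΩ (s, t)
  have h0mem : (0 : I) ∈ ({0, 1} : Set I) := Set.mem_insert _ _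
  have h1mem : (1 : I) ∈ ({0, 1} : Set I) := Set.mem_insert_iff.2 (Or.inr rfl)
  have hbotc : ∀ s : I, Ω (s, 0) = Ω (0, 0) := by
    intro s
    refine hp.const_of_comp (Ω.continuous.comp (continuous_id.prodMk continuous_const)) ?_ s 0
    intro a a'
    show p (Ω (a, 0)) = p (Ω (a', 0))
    rw [key, key, H.eq_fst a h0mem, H.eq_fst a' h0mem]
  have htopc : ∀ s : I, Ω (s, 1) = Ω (0, 1) := by
    intro s
    refine hp.const_of_comp (Ω.continuous.comp (continuous_id.prodMk continuous_const)) ?_ s 0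
    intro a a'
    show p (Ω (a, 1)) = p (Ω (a', 1))
    rw [key, key, H.eq_fst a h1mem, H.eq_fst a' h1mem]
  have g1 : ∀ t, Ω (0, t) = Γ₀ t := by
    have := hp.eq_of_comp_eq (g₁ := fun t : I => Ω (0, t)) (g₂ := fun t => Γ₀ t)
      (Ω.continuous.comp (Continuous.prodMk_right 0)) Γ₀.continuous
      (funext fun t => by show p (Ω (0, t)) = p (Γ₀ t); rw [key, H.apply_zero, h₀ t]; rfl)
      0 hΩ0
    exact fun t => congrFun this t
  have g2 : ∀ t, Ω (1, t) = Γ₁ t := by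
    have := hp.eq_of_comp_eq (g₁ := fun t : I => Ω (1, t)) (g₂ := fun t => Γ₁ t)
      (Ω.continuous.comp (Continuous.prodMk_right 1)) Γ₁.continuous
      (funext fun t => by show p (Ω (1, t)) = p (Γ₁ t); rw [key, H.apply_one, h₁ t]; rfl)
      0 (by show Ω (1, 0) = Γ₁ 0; rw [hbotc 1, hΩ0, hst])
    exact fun t => congrFun this t
  rw [← g1 1, ← g2 1, htopc 1]

end PUPB


attribute [local instance] Path.Homotopic.setoid
open PUPB

/-- The homomorphism `f_♯ : π₁(X, x) → π₁(Y, f x)` induced on fundamental groups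
by a continuous map `f : X → Y`. -/
noncomputable def inducedPi1Map {X Y : Type} [TopologicalSpace X] [TopologicalSpace Y]
    (f : C(X, Y)) (x : X) :
    Aut (FundamentalGroupoid.mk x) →* Aut (FundamentalGroupoid.mk (f x)) :=
  Functor.mapAut (X := FundamentalGroupoid.mk x)
    ((FundamentalGroupoid.fundamentalGroupoidFunctor.map
      (show TopCat.of X ⟶ TopCat.of Y from TopCat.ofHom f)) :
      FundamentalGroupoid X ⥤ FundamentalGroupoid Y)

/-- If `p : E → W` is a surjective covering map with `E` a universal cover (path-connected
and simply connected), `L ⊆ W` is a path-connected subspace with basepoint `x ∈ L`, and the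
inclusion-induced map `π₁(L, x) → π₁(W, x)` is bijective, then `p ⁻¹' L` is path-connected
and simply connected. -/
theorem preimage_universal_of_pi1_bijective
    {E W : Type} [TopologicalSpace E] [TopologicalSpace W]
    (p : E → W) (hp : IsCoveringMap p) (hsurj : Function.Surjective p)
    [PathConnectedSpace E] [SimplyConnectedSpace E]
    (L : Set W) (hLpc : IsPathConnected L) (x : W) (hx : x ∈ L)
    (hbij : Function.Bijective
      (inducedPi1Map (ContinuousMap.mk (Subtype.val : L → W) continuous_subtype_val)
        (⟨x, hx⟩ : L))) :
    IsPathConnected (p ⁻¹' L) ∧ SimplyConnectedSpace (p ⁻¹' L) := by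
  haveI : ∀ w : W, Nonempty (p ⁻¹' {w}) := fun w => ⟨⟨(hsurj w).choose, (hsurj w).choose_spec⟩⟩
  obtain ⟨e₀, he₀⟩ := hsurj x
  subst he₀
  set ι : C(↥L, W) := ContinuousMap.mk (Subtype.val : L → W) continuous_subtype_val with hι
  set xL : ↥L := (⟨p e₀, hx⟩ : ↥L) with hxL
  -- the induced functor on fundamental groupoids
  set Φ : FundamentalGroupoid ↥L ⥤ FundamentalGroupoid W :=
    ((FundamentalGroupoid.fundamentalGroupoidFunctor.map
      (show TopCat.of ↥L ⟶ TopCat.of W from TopCat.ofHom ι)) :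
      FundamentalGroupoid ↥L ⥤ FundamentalGroupoid W) with hΦ
  have hΦmap : ∀ {a b : ↥L} (q : Path a b),
      (Φ.map (X := FundamentalGroupoid.mk a) (Y := FundamentalGroupoid.mk b) ⟦q⟧ :
        Path.Homotopic.Quotient (ι a) (ι b)) = ⟦q.map ι.continuous⟧ := by
    intro a b q
    exact (FundamentalGroupoid.map_eq (X := TopCat.of ↥L) (Y := TopCat.of W) ι ⟦q⟧).trans
      (Path.Homotopic.Quotient.mk_map q ι)
  -- surjectivity: every loop at `p e₀` is homotopic to the image of a loop in `L`
  have hSurj : ∀ γ : Path (p e₀) (p e₀), ∃ δ : Path xL xL,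
      (δ.map continuous_subtype_val).Homotopic γ := by
    intro γ
    obtain ⟨g, hg⟩ := hbij.2 ((Groupoid.isoEquivHom _ _).symm
      (⟦γ⟧ : Path.Homotopic.Quotient (p e₀) (p e₀)))
    obtain ⟨δ, hδ⟩ := Quotient.exists_rep
      (g.hom : Path.Homotopic.Quotient xL xL)
    refine ⟨δ, Quotient.exact (s := Path.Homotopic.setoid _ _) ?_⟩
    have h1 : (inducedPi1Map ι xL g).hom = ⟦γ⟧ := by rw [hg]; rfl
    have h2 : (inducedPi1Map ι xL g).hom = Φ.map (X := FundamentalGroupoid.mk xL)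
        (Y := FundamentalGroupoid.mk xL) g.hom := rfl
    rw [h2, ← hδ, hΦmap δ] at h1
    exact h1
  -- injectivity: loops in `L` that die in `W` are null-homotopic in `L`
  have hInj : ∀ δ : Path xL xL,
      (δ.map continuous_subtype_val).Homotopic (Path.refl (p e₀)) →
        δ.Homotopic (Path.refl xL) := by
    intro δ h
    set gL : Aut (FundamentalGroupoid.mk xL) :=
      (Groupoid.isoEquivHom (FundamentalGroupoid.mk xL) (FundamentalGroupoid.mk xL)).symm (⟦δ⟧ : Path.Homotopic.Quotient xL xL) with hgL
    have h1 : inducedPi1Map ι xL gL = 1 := by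
      apply Iso.ext
      show Φ.map (X := FundamentalGroupoid.mk xL) (Y := FundamentalGroupoid.mk xL) gL.hom = _
      have h2 : gL.hom = (⟦δ⟧ : Path.Homotopic.Quotient xL xL) := rfl
      rw [h2, hΦmap δ]
      calc (⟦δ.map ι.continuous⟧ : Path.Homotopic.Quotient (ι xL) (ι xL))
          = ⟦Path.refl (p e₀)⟧ := Quotient.sound h
        _ = _ := by exact (FundamentalGroupoid.id_eq_path_refl (FundamentalGroupoid.mk (p e₀))).symm
    have h2 : gL = 1 := hbij.1 (by rw [h1, map_one])
    have h3 : (⟦δ⟧ : Path.Homotopic.Quotient xL xL) = ⟦Path.refl xL⟧ := by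
      have h4 : gL.hom = (1 : Aut (FundamentalGroupoid.mk xL)).hom := by rw [h2]
      exact h4.trans (FundamentalGroupoid.id_eq_path_refl (FundamentalGroupoid.mk xL))
    exact Quotient.exact h3
  -- Part 1: path-connectedness of the preimage
  have hpc : IsPathConnected (p ⁻¹' L) := by
    refine ⟨e₀, hx, ?_⟩
    intro e₁ he₁
    obtain ⟨c⟩ : Joined (⟨p e₁, he₁⟩ : ↥L) xL :=
      (hLpc.joinedIn _ he₁ _ hx).joined_subtype
    obtain ⟨Γ, hΓ, hΓ0⟩ := exists_path_lift hp
      ⟨fun u => (c u).val, continuous_subtype_val.comp c.continuous⟩ e₁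
      (by show p e₁ = (c 0).val; rw [c.source])
    set e₂ : E := Γ 1 with he₂def
    have he₂ : p e₂ = p e₀ := by
      show p (Γ 1) = p e₀
      rw [hΓ 1]
      show (c 1).val = p e₀
      rw [c.target]
    set β : Path e₂ e₀ := PathConnectedSpace.somePath e₂ e₀ with hβ
    set γW : Path (p e₀) (p e₀) := (β.map hp.continuous).cast he₂.symm rfl with hγW
    obtain ⟨δ, hδ⟩ := hSurj γW
    obtain ⟨Δ, hΔ, hΔ0⟩ := exists_path_lift hp
      ⟨fun u => ((δ.map continuous_subtype_val) u : W), (δ.map continuous_subtype_val).continuous⟩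
      e₂ (by show p e₂ = ((δ 0 : ↥L) : W); rw [δ.source]; exact he₂)
    have hend : Δ 1 = e₀ := by
      have hβlift : ∀ t, p (β.toContinuousMap t) = γW t := fun t => rfl
      have h := lift_end_eq hp hδ (Γ₀ := Δ) (Γ₁ := β.toContinuousMap)
        (fun t => hΔ t) hβlift (by rw [hΔ0]; exact β.source.symm)
      rw [h]
      exact β.target
    have j1 : JoinedIn (p ⁻¹' L) e₁ e₂ := by
      refine ⟨⟨Γ, hΓ0, rfl⟩, ?_⟩
      intro t
      show p (Γ t) ∈ L
      rw [hΓ t]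
      exact (c t).2
    have j2 : JoinedIn (p ⁻¹' L) e₂ e₀ := by
      refine ⟨⟨Δ, hΔ0, hend⟩, ?_⟩
      intro t
      show p (Δ t) ∈ L
      rw [hΔ t]
      exact (δ t).2
    exact (j1.trans j2).symm
  refine ⟨hpc, ?_⟩
  -- Part 2: simple connectedness of the preimage
  haveI hpcs : PathConnectedSpace ↥(p ⁻¹' L) := isPathConnected_iff_pathConnectedSpace.1 hpc
  set E₀ : ↥(p ⁻¹' L) := ⟨e₀, hx⟩ with hE₀
  have hq : Continuous fun z : ↥(p ⁻¹' L) => (⟨p z.1, z.2⟩ : ↥L) :=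
    (hp.continuous.comp continuous_subtype_val).subtype_mk _
  have claim1 : ∀ α : Path E₀ E₀, α.Homotopic (Path.refl E₀) := by
    intro α
    set αE : Path e₀ e₀ := α.map continuous_subtype_val with hαE
    set δ : Path xL xL := α.map hq with hδdef
    have h1 : (αE.map hp.continuous).Homotopic ((Path.refl e₀).map hp.continuous) :=
      Path.Homotopic.map (SimplyConnectedSpace.paths_homotopic αE (Path.refl e₀))
        ⟨p, hp.continuous⟩
    have h2 : (δ.map continuous_subtype_val).Homotopic (Path.refl (p e₀)) := h1
    obtain ⟨h⟩ := hInj δ h2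
    set Hc : C(I × I, W) :=
      (ContinuousMap.mk (Subtype.val : L → W) continuous_subtype_val).comp
        h.toContinuousMap with hHc
    have hΩe : p e₀ = Hc (0, 0) := by
      show p e₀ = ((h (0, 0) : ↥L) : W)
      have : h (0, 0) = δ 0 := h.apply_zero 0
      rw [this, δ.source]
    obtain ⟨Ω, hΩ, hΩ0⟩ := exists_square_lift hp Hc e₀ hΩe
    have hmemΩ : ∀ z, Ω z ∈ p ⁻¹' L := by
      intro z
      show p (Ω z) ∈ L
      rw [hΩ z]
      exact (h.toContinuousMap z).2
    have h0mem : (0 : I) ∈ ({0, 1} : Set I) := Set.mem_insert _ _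
    have h1mem : (1 : I) ∈ ({0, 1} : Set I) := Set.mem_insert_iff.2 (Or.inr rfl)
    have hbotc : ∀ s : I, Ω (s, 0) = e₀ := by
      have hc : ∀ s : I, Ω (s, 0) = Ω (0, 0) := by
        intro s
        refine hp.const_of_comp (Ω.continuous.comp (continuous_id.prodMk continuous_const))
          ?_ s 0
        intro a a'
        show p (Ω (a, 0)) = p (Ω (a', 0))
        rw [hΩ (a, 0), hΩ (a', 0)]
        show ((h (a, 0) : ↥L) : W) = ((h (a', 0) : ↥L) : W)
        rw [h.eq_fst a h0mem, h.eq_fst a' h0mem]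
      intro s; rw [hc s, hΩ0]
    have hzero : ∀ t, Ω (0, t) = (α t).val := by
      have := hp.eq_of_comp_eq (g₁ := fun t : I => Ω (0, t)) (g₂ := fun t => (α t).val)
        (Ω.continuous.comp (Continuous.prodMk_right 0))
        (continuous_subtype_val.comp α.continuous)
        (funext fun t => by
          show p (Ω (0, t)) = p ((α t).val)
          rw [hΩ (0, t)]
          show ((h (0, t) : ↥L) : W) = _
          rw [h.apply_zero]
          rfl)
        0 (by show Ω (0, 0) = (α 0).val; rw [hΩ0, α.source])
      exact fun t => congrFun this t
    have htopc : ∀ s : I, Ω (s, 1) = (α 1).val := by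
      have hc : ∀ s : I, Ω (s, 1) = Ω (0, 1) := by
        intro s
        refine hp.const_of_comp (Ω.continuous.comp (continuous_id.prodMk continuous_const))
          ?_ s 0
        intro a a'
        show p (Ω (a, 1)) = p (Ω (a', 1))
        rw [hΩ (a, 1), hΩ (a', 1)]
        show ((h (a, 1) : ↥L) : W) = ((h (a', 1) : ↥L) : W)
        rw [h.eq_fst a h1mem, h.eq_fst a' h1mem]
      intro s; rw [hc s, hzero 1]
    have hone : ∀ t, Ω (1, t) = e₀ := by
      have := hp.eq_of_comp_eq (g₁ := fun t : I => Ω (1, t)) (g₂ := fun _ => e₀)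
        (Ω.continuous.comp (Continuous.prodMk_right 1)) continuous_const
        (funext fun t => by
          show p (Ω (1, t)) = p e₀
          rw [hΩ (1, t)]
          show ((h (1, t) : ↥L) : W) = _
          rw [h.apply_one]
          rfl)
        0 (by show Ω (1, 0) = e₀; exact hbotc 1)
      exact fun t => congrFun this t
    have hα1 : (α 1).val = e₀ := by rw [α.target]
    refine Nonempty.intro ⟨⟨⟨fun z => ⟨Ω z, hmemΩ z⟩, Ω.continuous.subtype_mk _⟩, ?_, ?_⟩, ?_⟩
    · intro t
      exact Subtype.ext (hzero t)
    · intro t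
      exact Subtype.ext (hone t)
    · intro s t ht
      rcases ht with ht | ht
      · subst ht
        refine Subtype.ext ?_
        show Ω (s, 0) = (α 0).val
        rw [hbotc s, α.source]
      · rw [Set.mem_singleton_iff] at ht
        subst ht
        refine Subtype.ext ?_
        show Ω (s, 1) = (α 1).val
        rw [htopc s]
  -- conclude: a path-connected space whose loops at one point are trivial is simply connected
  rw [simply_connected_iff_paths_homotopic]
  refine ⟨hpcs, ?_⟩
  intro a b
  constructor
  intro f g
  obtain ⟨P, rfl⟩ := Quotient.exists_rep f
  obtain ⟨Q, rfl⟩ := Quotient.exists_rep g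
  have hloop : ∀ h : (FundamentalGroupoid.mk E₀ ⟶ FundamentalGroupoid.mk E₀), h = 𝟙 _ := by
    intro h
    obtain ⟨R, rfl⟩ := Quotient.exists_rep (h : Path.Homotopic.Quotient E₀ E₀)
    rw [FundamentalGroupoid.id_eq_path_refl]
    exact Quotient.sound (claim1 R)
  set u : Path E₀ a := PathConnectedSpace.somePath E₀ a with hu
  set v : Path b E₀ := PathConnectedSpace.somePath b E₀ with hv
  set fu : FundamentalGroupoid.mk E₀ ⟶ FundamentalGroupoid.mk a :=
    (⟦u⟧ : Path.Homotopic.Quotient E₀ a) with hfu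
  set fv : FundamentalGroupoid.mk b ⟶ FundamentalGroupoid.mk E₀ :=
    (⟦v⟧ : Path.Homotopic.Quotient b E₀) with hfv
  set fP : FundamentalGroupoid.mk a ⟶ FundamentalGroupoid.mk b :=
    (⟦P⟧ : Path.Homotopic.Quotient a b) with hfP
  set fQ : FundamentalGroupoid.mk a ⟶ FundamentalGroupoid.mk b :=
    (⟦Q⟧ : Path.Homotopic.Quotient a b) with hfQ
  have h1 : (fu ≫ fP) ≫ fv = (fu ≫ fQ) ≫ fv := by
    rw [hloop ((fu ≫ fP) ≫ fv), hloop ((fu ≫ fQ) ≫ fv)]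
  have h2 : fP = fQ := by
    rwa [cancel_mono fv, cancel_epi fu] at h1
  exact h2
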